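/- Under the standing assumptions, P is the unique maximal two-sided ideal of R: every proper two-sided ideal of R is contained in P. Moreover, every regular element of R that does not lie in P is invertible in R. -/

import Mathlib

open Pointwise

/-- `P` is a two-sided ideal of the subring `R` of `A`. -/
def IsIdealOf {A : Type*} [Ring A] (R : Subring A) (P : Set A) : Prop :=
  P ⊆ (R : Set A) ∧ (0 : A) ∈ P ∧ (∀ x ∈ P, ∀ y ∈ P, x + y ∈ P) ∧ (∀ x ∈ P, -x ∈ P) ∧
    (∀ r ∈ R, ∀ p ∈ P, r * p ∈ P) ∧ (∀ r ∈ R, ∀ p ∈ P, p * r ∈ P)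

/-- `(R, P)` is a prime in the ring `A`. -/
def IsPrimeIn {A : Type*} [Ring A] (R : Subring A) (P : Set A) : Prop :=
  IsIdealOf R P ∧ ∀ x y : A, (∀ r ∈ R, x * r * y ∈ P) → x ∈ P ∨ y ∈ P

/-- `(R, P)` is a strict fractional prime in the ring `A`. -/
def IsStrictFractionalPrime {A : Type*} [Ring A] (R : Subring A) (P : Set A) : Prop :=
  IsPrimeIn R P ∧ ∀ r : A, r ≠ 0 → ∃ x ∈ R, ∃ y ∈ R, x * r * y ≠ 0 ∧ x * r * y ∈ R

/-- The set of elements of the subring `R` which are regular in `R`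
(non-zero-divisors of the ring `R`). -/
def regularIn {A : Type*} [Ring A] (R : Subring A) : Set A :=
  {x : A | x ∈ R ∧ (∀ y ∈ R, x * y = 0 → y = 0) ∧ (∀ y ∈ R, y * x = 0 → y = 0)}

/-- A ring is Goldie if its set of regular elements satisfies the left and right Ore
conditions and the corresponding Ore localization is a semisimple ring. -/
def IsGoldieRing (R : Type*) [Ring R] : Prop :=
  (∀ (r : R), ∀ s ∈ nonZeroDivisors R, ∃ r' : R, ∃ s' ∈ nonZeroDivisors R, s' * r = r' * s) ∧
  (∀ (r : R), ∀ s ∈ nonZeroDivisors R, ∃ r' : R, ∃ s' ∈ nonZeroDivisors R, r * s' = s * r') ∧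
  ∃ _i : OreLocalization.OreSet (nonZeroDivisors R),
    IsSemisimpleRing (OreLocalization (nonZeroDivisors R) R)

/-- `A^P`, the set of elements of `A` stabilizing `P` on both sides. -/
def stabilizerSet {A : Type*} [Ring A] (P : Set A) : Set A :=
  {a : A | (∀ p ∈ P, a * p ∈ P) ∧ ∀ p ∈ P, p * a ∈ P}

/-- The fractional `R`-ideals of `A`. -/
def IsFractionalIdeal {A : Type*} [Ring A] (R : Subring A) (I : Set A) : Prop :=
  ((0 : A) ∈ I ∧ (∀ x ∈ I, ∀ y ∈ I, x + y ∈ I) ∧ (∀ x ∈ I, -x ∈ I)) ∧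
  (∀ r ∈ R, ∀ x ∈ I, r * x ∈ I) ∧ (∀ r ∈ R, ∀ x ∈ I, x * r ∈ I) ∧
  (∃ u ∈ I, u ∈ regularIn R) ∧ (∃ r ∈ regularIn R, ∀ x ∈ I, r * x ∈ (R : Set A))

/-- The fractional ideal `RaR` generated by an element `a ∈ A`. -/
def genFracIdeal {A : Type*} [Ring A] (R : Subring A) (a : A) : Set A :=
  (R : Set A) * {a} * (R : Set A)

/-- `v(I) = (P : I) = {a ∈ A ∣ aI ⊆ P}`. -/
def vP {A : Type*} [Ring A] (P I : Set A) : Set A :=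
  {a : A | ∀ x ∈ I, a * x ∈ P}

/-- The additive subgroup generated by the `n`-fold products of elements of `P`. -/
def idealPow {A : Type*} [Ring A] (P : Set A) (n : ℕ) : Set A :=
  (AddSubgroup.closure (P ^ n) : Set A)

/-- `C(P)`: the elements of `R` which are regular modulo `P`. -/
def CP {A : Type*} [Ring A] (R : Subring A) (P : Set A) : Set A :=
  {x : A | x ∈ R ∧ (∀ y ∈ R, x * y ∈ P → y ∈ P) ∧ ∀ y ∈ R, y * x ∈ P → y ∈ P}

/-- `R` is an order in `A`: every regular element of `R` is invertible in `A` and every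
element of `A` is of the form `s⁻¹ * r` and of the form `r' * s'⁻¹` with `r, r' ∈ R` and
`s, s'` regular in `R`. -/
def IsOrderIn {A : Type*} [Ring A] (R : Subring A) : Prop :=
  (∀ s ∈ regularIn R, IsUnit s) ∧
  (∀ a : A, ∃ s ∈ regularIn R, ∃ r ∈ (R : Set A), s * a = r) ∧
  (∀ a : A, ∃ s ∈ regularIn R, ∃ r ∈ (R : Set A), a * s = r)

/-- `R` is a Dubrovin valuation ring of `A` with associated ideal `P`:
`P` is a two-sided ideal of `R` such that `R/P` is a simple Artinian ring and for every
`a ∈ A \ R` there are `x, y ∈ R` with `xa ∈ R \ P` and `ay ∈ R \ P`. -/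
def IsDubrovinValuation {A : Type*} [Ring A] (R : Subring A) (P : Set A) : Prop :=
  IsIdealOf R P ∧
  (∀ Q : TwoSidedIdeal R, (∀ x : R, x ∈ Q ↔ (x : A) ∈ P) →
    IsSimpleRing Q.ringCon.Quotient ∧ IsArtinianRing Q.ringCon.Quotient) ∧
  ∀ a : A, a ∉ R →
    (∃ x ∈ R, x * a ∈ R ∧ x * a ∉ P) ∧ (∃ y ∈ R, a * y ∈ R ∧ a * y ∉ P)

/-- `P` coincides with the Jacobson radical of the subring `R` (the intersection of the
maximal left ideals of `R`). -/
def IsJacobsonRadicalOf {A : Type*} [Ring A] (R : Subring A) (P : Set A) : Prop :=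
  ∀ x : R, (x : A) ∈ P ↔ x ∈ (⊥ : Ideal R).jacobson

section Aux
variable {A : Type*} [Ring A]

/-- In a simple ring, 1 is an additive combination of `x*v*y` for any `v ≠ 0`. -/
lemma one_mem_closure_mul [IsSimpleRing A] (v : A) (hv : v ≠ 0) :
    (1 : A) ∈ AddSubgroup.closure {z : A | ∃ x y, z = x * v * y} := by
  set S : Set A := {z : A | ∃ x y, z = x * v * y} with hS
  have hmul_left : ∀ {x y : A}, y ∈ (AddSubgroup.closure S : Set A) →
      x * y ∈ (AddSubgroup.closure S : Set A) := by
    intro x y hy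
    induction hy using AddSubgroup.closure_induction with
    | mem z hz => obtain ⟨a, b, rfl⟩ := hz
                  exact AddSubgroup.subset_closure ⟨x * a, b, by simp only [mul_assoc]⟩
    | zero => simpa using (AddSubgroup.closure S).zero_mem
    | add a b _ _ ha hb => rw [mul_add]; exact (AddSubgroup.closure S).add_mem ha hb
    | neg a _ ha => rw [mul_neg]; exact (AddSubgroup.closure S).neg_mem ha
  have hmul_right : ∀ {x y : A}, x ∈ (AddSubgroup.closure S : Set A) →
      x * y ∈ (AddSubgroup.closure S : Set A) := by
    intro x y hx
    induction hx using AddSubgroup.closure_induction with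
    | mem z hz => obtain ⟨a, b, rfl⟩ := hz
                  exact AddSubgroup.subset_closure ⟨a, b * y, by simp [mul_assoc]⟩
    | zero => simpa using (AddSubgroup.closure S).zero_mem
    | add a b _ _ ha hb => rw [add_mul]; exact (AddSubgroup.closure S).add_mem ha hb
    | neg a _ ha => rw [neg_mul]; exact (AddSubgroup.closure S).neg_mem ha
  set K : TwoSidedIdeal A := TwoSidedIdeal.mk' (AddSubgroup.closure S)
    (AddSubgroup.closure S).zero_mem
    (fun hx hy => (AddSubgroup.closure S).add_mem hx hy)
    (fun hx => (AddSubgroup.closure S).neg_mem hx)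
    hmul_left hmul_right with hK
  have hvK : v ∈ K := by
    rw [hK, TwoSidedIdeal.mem_mk']
    exact AddSubgroup.subset_closure ⟨1, 1, by simp⟩
  rcases IsSimpleRing.simple.eq_bot_or_eq_top K with h | h
  · rw [h, TwoSidedIdeal.mem_bot] at hvK; exact absurd hvK hv
  · have : (1 : A) ∈ K := by rw [h]; trivial
    rwa [hK, TwoSidedIdeal.mem_mk'] at this

end Aux

section Aux2
variable {A : Type*} [Ring A]

/-- right-multiplication as a left-module endomorphism -/
def mulRightLin (u : A) : A →ₗ[A] A where
  toFun x := x * u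
  map_add' x y := add_mul x y u
  map_smul' m x := mul_assoc m x u

/-- In a left-Artinian ring, an element with trivial left annihilator is a unit. -/
lemma unit_of_lann_eq_bot [IsArtinianRing A] (u : A) (h : ∀ y : A, y * u = 0 → y = 0) :
    ∃ v : A, u * v = 1 ∧ v * u = 1 := by
  have hinj : Function.Injective (mulRightLin u) := by
    intro x y hxy
    have : (x - y) * u = 0 := by
      simp only [sub_mul, sub_eq_zero]; exact hxy
    have h0 : x - y = 0 := h _ this
    exact sub_eq_zero.mp h0
  obtain ⟨v, hv⟩ := IsArtinian.surjective_of_injective_endomorphism (mulRightLin u) hinj 1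
  have hvu : v * u = 1 := hv
  refine ⟨v, ?_, hvu⟩
  have : (u * v - 1) * u = 0 := by
    rw [sub_mul, one_mul, mul_assoc, hvu, mul_one, sub_self]
  have := h _ this
  rwa [sub_eq_zero] at this

/-- left annihilator as a left ideal -/
def lannIdeal (a : A) : Ideal A where
  carrier := {z : A | z * a = 0}
  add_mem' := by intro x y hx hy; simp only [Set.mem_setOf_eq, add_mul] at *; rw [hx, hy, add_zero]
  zero_mem' := by simp
  smul_mem' := by intro c x hx; simp only [Set.mem_setOf_eq, smul_eq_mul, mul_assoc] at *; rw [hx, mul_zero]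

/-- Brauer's lemma: a nonzero left ideal of a simple left-Artinian ring contains a
nonzero idempotent. -/
lemma exists_idempotent_of_ne_bot [IsSimpleRing A] [IsArtinianRing A]
    (L : Ideal A) (hL : L ≠ ⊥) : ∃ e : A, e ∈ L ∧ e * e = e ∧ e ≠ 0 := by
  -- minimal nonzero left ideal below L
  have wf : WellFounded ((· < ·) : Ideal A → Ideal A → Prop) := IsWellFounded.wf
  obtain ⟨V, ⟨hVL, hVne⟩, hmin⟩ := wf.has_min {J : Ideal A | J ≤ L ∧ J ≠ ⊥} ⟨L, le_refl L, hL⟩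
  -- V² ≠ 0
  obtain ⟨v₀, hv₀V, hv₀⟩ := Submodule.exists_mem_ne_zero_of_ne_bot hVne
  have hVV : ∃ w ∈ V, ∃ v ∈ V, w * v ≠ 0 := by
    by_contra hcon
    push_neg at hcon
    have hall : ∀ w ∈ V, w = (0 : A) := by
      intro w hw
      have h1 := one_mem_closure_mul v₀ hv₀
      have key : ∀ c ∈ AddSubgroup.closure {z : A | ∃ x y, z = x * v₀ * y}, w * c = 0 := by
        intro c hc
        induction hc using AddSubgroup.closure_induction with
        | mem z hz =>
            obtain ⟨x, y, rfl⟩ := hz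
            have hxv : x * v₀ ∈ V := V.smul_mem x hv₀V
            have : w * (x * v₀) = 0 := hcon w hw _ hxv
            rw [show w * (x * v₀ * y) = w * (x * v₀) * y by simp [mul_assoc], this, zero_mul]
        | zero => simp
        | add a b _ _ ha hb => rw [mul_add, ha, hb, add_zero]
        | neg a _ ha => rw [mul_neg, ha, neg_zero]
      have := key 1 h1
      rwa [mul_one] at this
    exact hv₀ (hall v₀ hv₀V)
  obtain ⟨w, hwV, v, hvV, hwv⟩ := hVV
  have hvne : v ≠ 0 := by rintro rfl; simp at hwv
  -- Vv = V
  set Vv : Ideal A := Submodule.map (mulRightLin v) V with hVv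
  have hVvle : Vv ≤ V := by
    rintro z ⟨x, hxV, rfl⟩
    exact V.smul_mem x hvV
  have hVvne : Vv ≠ ⊥ := by
    intro hbot
    have : w * v ∈ Vv := ⟨w, hwV, rfl⟩
    rw [hbot, Submodule.mem_bot] at this
    exact hwv this
  have hVveq : Vv = V := by
    by_contra hne
    exact hmin Vv ⟨hVvle.trans hVL, hVvne⟩ (lt_of_le_of_ne hVvle hne)
  have hvmem : v ∈ Vv := hVveq ▸ hvV
  obtain ⟨e, heV, hev⟩ := hvmem
  have hev : e * v = v := hev
  have hvne' : v ≠ 0 := hvne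
  have hene : e ≠ 0 := by rintro rfl; rw [zero_mul] at hev; exact hvne' hev.symm
  -- W = V ⊓ lannIdeal v = ⊥
  set W : Ideal A := V ⊓ lannIdeal v with hW
  have hWV : W ≤ V := inf_le_left
  have heW : e ∉ W := by
    intro hmem
    rw [hW, Submodule.mem_inf] at hmem
    have : e * v = 0 := hmem.2
    rw [hev] at this; exact hvne' this
  have hWbot : W = ⊥ := by
    by_contra hne
    exact (hmin W ⟨hWV.trans hVL, hne⟩) (lt_of_le_of_ne hWV (fun h => heW (h ▸ heV)))
  have hidem : e * e = e := by
    have hmem : e * e - e ∈ W := by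
      rw [hW, Submodule.mem_inf]
      constructor
      · exact V.sub_mem (V.smul_mem e heV) heV
      · show (e * e - e) * v = 0
        rw [sub_mul, mul_assoc, hev, hev, sub_self]
    rw [hWbot, Submodule.mem_bot] at hmem
    rwa [sub_eq_zero] at hmem
  exact ⟨e, hVL heV, hidem, hene⟩

end Aux2

section MainAux

open Pointwise

variable {A : Type*} [Ring A]

theorem statement_5' [IsSimpleRing A] [IsArtinianRing A]
    (R : Subring A) (P : Set A)
    (hprime : IsStrictFractionalPrime R P)
    (hRP : (R : Set A) = stabilizerSet P)
    (hGoldie : IsGoldieRing R)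
    (hinv : ∀ u : Aˣ, ∀ p ∈ P, (u : A) * p * (↑u⁻¹ : A) ∈ P) :
    (∀ I : Set A, IsIdealOf R I → I ≠ (R : Set A) → I ⊆ P) ∧
    ∀ u ∈ regularIn R, u ∉ P → ∃ w ∈ R, u * w = 1 ∧ w * u = 1 := by
  obtain ⟨⟨hPideal, hPprime⟩, hstrict⟩ := hprime
  obtain ⟨hPR, hP0, hPadd, hPneg, hPml, hPmr⟩ := hPideal
  by_cases h1 : (1 : A) ∈ P
  · -- trivial case P = R
    have hRsubP : ∀ x ∈ R, x ∈ P := by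
      intro x hx
      have := hPml x hx 1 h1; rwa [mul_one] at this
    constructor
    · intro I hI _ x hx
      exact hRsubP x (hI.1 hx)
    · intro u hu hup
      exact absurd (hRsubP u hu.1) hup
  · -- main case 1 ∉ P
    have hL1 : ∀ v : Aˣ, (v : A) ∉ P → ((↑v⁻¹ : A) ∈ (R : Set A)) := by
      intro v hv
      rw [hRP]
      constructor
      · intro p hp
        refine (hPprime (↑v⁻¹ * p) (↑v) ?_).resolve_right hv
        intro r hr
        have h2 : (↑v⁻¹ : A) * (p * r) * ↑(v⁻¹)⁻¹ ∈ P := hinv v⁻¹ (p * r) (hPmr r hr p hp)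
        rw [inv_inv] at h2
        have heq : (↑v⁻¹ * p) * r * (↑v : A) = (↑v⁻¹ : A) * (p * r) * ↑v := by
          simp only [mul_assoc]
        rwa [heq]
      · intro p hp
        refine (hPprime (↑v) (p * ↑v⁻¹) ?_).resolve_left hv
        intro r hr
        have h2 : (↑v : A) * (r * p) * ↑v⁻¹ ∈ P := hinv v (r * p) (hPml r hr p hp)
        have heq : (↑v : A) * r * (p * ↑v⁻¹) = (↑v : A) * (r * p) * ↑v⁻¹ := by
          simp only [mul_assoc]
        rwa [heq]
    have hD : ∀ v : Aˣ, ((v : A) ∈ (R : Set A)) ∨ ((↑v⁻¹ : A) ∈ (R : Set A)) := by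
      intro v
      by_cases hv : (v : A) ∈ P
      · left
        have hvinv : (↑v⁻¹ : A) ∉ P := by
          intro hvi
          apply h1
          have := hPml (↑v⁻¹) (hPR hvi) (↑v) hv
          rwa [Units.inv_mul] at this
        have := hL1 v⁻¹ hvinv
        rwa [inv_inv] at this
      · right; exact hL1 v hv
    by_cases hid : ∃ e : A, e * e = e ∧ e ≠ 0 ∧ e ≠ 1
    · -- Subcase A: nontrivial idempotent, R = A
      obtain ⟨e, he, he0, he1⟩ := hid
      have hmemR : ∀ t : A, t * t = 0 → t ∈ (R : Set A) := by
        intro t htt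
        have hu1 : (1 + t) * (1 - t) = 1 := by
          have : (1 + t) * (1 - t) = 1 - t * t := by noncomm_ring
          rw [this, htt, sub_zero]
        have hu2 : (1 - t) * (1 + t) = 1 := by
          have : (1 - t) * (1 + t) = 1 - t * t := by noncomm_ring
          rw [this, htt, sub_zero]
        rcases hD ⟨1 + t, 1 - t, hu1, hu2⟩ with h | h
        · have h' : (1 + t) ∈ R := h
          have := R.sub_mem h' R.one_mem
          simpa using this
        · have h' : (1 - t) ∈ R := h
          have := R.neg_mem (R.sub_mem h' R.one_mem)
          simpa using this
      have hE1 : ∀ s : A, e * s * (1 - e) ∈ (R : Set A) := by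
        intro s
        apply hmemR
        have h0 : (1 - e) * e = 0 := by rw [sub_mul, one_mul, he, sub_self]
        calc e * s * (1 - e) * (e * s * (1 - e))
            = e * (s * (((1 - e) * e) * (s * (1 - e)))) := by simp only [mul_assoc]
          _ = 0 := by rw [h0, zero_mul, mul_zero, mul_zero]
      have hE2 : ∀ s : A, (1 - e) * s * e ∈ (R : Set A) := by
        intro s
        apply hmemR
        have h0 : e * (1 - e) = 0 := by rw [mul_sub, mul_one, he, sub_self]
        calc (1 - e) * s * e * ((1 - e) * s * e)
            = (1 - e) * (s * ((e * (1 - e)) * (s * e))) := by simp only [mul_assoc]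
          _ = 0 := by rw [h0, zero_mul, mul_zero, mul_zero]
      have hff : (1 - e) * (1 - e) = 1 - e := by
        rw [sub_mul, one_mul, mul_sub, mul_one, he]; abel
      have hcorner1 : ∀ a : A, e * a * e ∈ (R : Set A) := by
        intro a
        have h1e : (1 : A) - e ≠ 0 := sub_ne_zero.mpr (Ne.symm he1)
        have hcl := one_mem_closure_mul (1 - e) h1e
        suffices hsub : ∀ c ∈ AddSubgroup.closure {z : A | ∃ x y, z = x * (1 - e) * y},
            e * (a * c) * e ∈ (R : Set A) by
          have := hsub 1 hcl; rwa [mul_one] at this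
        intro c hc
        induction hc using AddSubgroup.closure_induction with
        | mem z hz =>
            obtain ⟨x, y, rfl⟩ := hz
            have k1 := hE1 (a * x)
            have k2 := hE2 y
            have hmul := R.mul_mem k1 k2
            have heq : (e * (a * x) * (1 - e)) * ((1 - e) * y * e) = e * (a * (x * (1 - e) * y)) * e := by
              simp only [mul_assoc]
              rw [show (1 - e) * ((1 - e) * (y * e)) = (1 - e) * (y * e) by
                rw [← mul_assoc, hff]]
            rw [← heq]
            exact hmul
        | zero => simpa using R.zero_mem
        | add c d _ _ hcR hdR =>
            have heq : e * (a * (c + d)) * e = e * (a * c) * e + e * (a * d) * e := by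
              noncomm_ring
            rw [heq]; exact R.add_mem hcR hdR
        | neg c _ hcR =>
            have heq : e * (a * (-c)) * e = -(e * (a * c) * e) := by noncomm_ring
            rw [heq]; exact R.neg_mem hcR
      have hcorner2 : ∀ a : A, (1 - e) * a * (1 - e) ∈ (R : Set A) := by
        intro a
        have hcl := one_mem_closure_mul e he0
        suffices hsub : ∀ c ∈ AddSubgroup.closure {z : A | ∃ x y, z = x * e * y},
            (1 - e) * (a * c) * (1 - e) ∈ (R : Set A) by
          have := hsub 1 hcl; rwa [mul_one] at this
        intro c hc
        induction hc using AddSubgroup.closure_induction with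
        | mem z hz =>
            obtain ⟨x, y, rfl⟩ := hz
            have k1 := hE2 (a * x)
            have k2 := hE1 y
            have hmul := R.mul_mem k1 k2
            have heq : ((1 - e) * (a * x) * e) * (e * y * (1 - e)) = (1 - e) * (a * (x * e * y)) * (1 - e) := by
              simp only [mul_assoc]
              rw [show e * (e * (y * (1 - e))) = e * (y * (1 - e)) by
                rw [← mul_assoc, he]]
            rw [← heq]
            exact hmul
        | zero => simpa using R.zero_mem
        | add c d _ _ hcR hdR =>
            have heq : (1 - e) * (a * (c + d)) * (1 - e) = (1 - e) * (a * c) * (1 - e) + (1 - e) * (a * d) * (1 - e) := by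
              noncomm_ring
            rw [heq]; exact R.add_mem hcR hdR
        | neg c _ hcR =>
            have heq : (1 - e) * (a * (-c)) * (1 - e) = -((1 - e) * (a * c) * (1 - e)) := by noncomm_ring
            rw [heq]; exact R.neg_mem hcR
      have hRtop : ∀ a : A, a ∈ (R : Set A) := by
        intro a
        have hdec : a = e * a * e + (e * a * (1 - e) + ((1 - e) * a * e + (1 - e) * a * (1 - e))) := by
          noncomm_ring
        rw [hdec]
        exact R.add_mem (hcorner1 a) (R.add_mem (hE1 a) (R.add_mem (hE2 a) (hcorner2 a)))
      constructor
      · intro I hI hIne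
        obtain ⟨hIR, hI0, hIadd, hIneg, hIml, hImr⟩ := hI
        rcases IsSimpleRing.simple.eq_bot_or_eq_top
            (TwoSidedIdeal.mk' I hI0 (fun hx hy => hIadd _ hx _ hy) (fun hx => hIneg _ hx)
              (fun {x y} hy => hIml x (hRtop x) y hy)
              (fun {x y} hx => hImr y (hRtop y) x hx)) with h | h
        · intro x hx
          have hxJ : x ∈ TwoSidedIdeal.mk' I hI0 (fun hx hy => hIadd _ hx _ hy) (fun hx => hIneg _ hx)
              (fun {x y} hy => hIml x (hRtop x) y hy)
              (fun {x y} hx => hImr y (hRtop y) x hx) := by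
            rw [TwoSidedIdeal.mem_mk']; exact hx
          rw [h, TwoSidedIdeal.mem_bot] at hxJ
          rw [hxJ]; exact hP0
        · exfalso; apply hIne
          apply Set.Subset.antisymm hIR
          intro x _
          have hxJ : x ∈ TwoSidedIdeal.mk' I hI0 (fun hx hy => hIadd _ hx _ hy) (fun hx => hIneg _ hx)
              (fun {x y} hy => hIml x (hRtop x) y hy)
              (fun {x y} hx => hImr y (hRtop y) x hx) := by
            rw [h]; trivial
          rwa [TwoSidedIdeal.mem_mk'] at hxJ
      · intro u hu hup
        obtain ⟨huR, hul, hur⟩ := hu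
        obtain ⟨v, hv1, hv2⟩ := unit_of_lann_eq_bot u (fun y hy => hur y (hRtop y) hy)
        exact ⟨v, hRtop v, hv1, hv2⟩
    · -- Subcase B: division ring
      push_neg at hid
      have hdiv : ∀ a : A, a ≠ 0 → ∃ b : A, a * b = 1 ∧ b * a = 1 := by
        intro a ha
        apply unit_of_lann_eq_bot
        intro y hy
        by_contra hy0
        have hL : lannIdeal a ≠ ⊥ := by
          intro hbot
          have : y ∈ lannIdeal a := hy
          rw [hbot, Submodule.mem_bot] at this
          exact hy0 this
        obtain ⟨f, hfL, hff, hf0⟩ := exists_idempotent_of_ne_bot (lannIdeal a) hL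
        have hfa : f * a = 0 := hfL
        have hf1 : f = 1 := hid f hff hf0
        rw [hf1, one_mul] at hfa
        exact ha hfa
      have hunitR : ∀ a : A, a ∉ P → a ≠ 0 → ∃ b : A, a * b = 1 ∧ b * a = 1 ∧ b ∈ (R : Set A) := by
        intro a haP ha0
        obtain ⟨b, hb1, hb2⟩ := hdiv a ha0
        have := hL1 ⟨a, b, hb1, hb2⟩ haP
        exact ⟨b, hb1, hb2, this⟩
      constructor
      · intro I hI hIne x hx
        by_contra hxP
        have hx0 : x ≠ 0 := fun h => hxP (h ▸ hP0)
        obtain ⟨b, hb1, hb2, hbR⟩ := hunitR x hxP hx0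
        have h1I : (1 : A) ∈ I := by
          have := hI.2.2.2.2.2 b hbR x hx
          rwa [hb1] at this
        apply hIne
        apply Set.Subset.antisymm hI.1
        intro y hyR
        have := hI.2.2.2.2.1 y hyR 1 h1I
        rwa [mul_one] at this
      · intro u hu hup
        have hu0 : u ≠ 0 := fun h => hup (h ▸ hP0)
        obtain ⟨b, hb1, hb2, hbR⟩ := hunitR u hup hu0
        exact ⟨b, hbR, hb1, hb2⟩

end MainAux

theorem statement_5 {A : Type*} [Ring A] [IsSimpleRing A] [IsArtinianRing A]
    (R : Subring A) (P : Set A)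
    (hprime : IsStrictFractionalPrime R P)
    (hRP : (R : Set A) = stabilizerSet P)
    (hGoldie : IsGoldieRing R)
    (hinv : ∀ u : Aˣ, ∀ p ∈ P, (u : A) * p * (↑u⁻¹ : A) ∈ P) :
    (∀ I : Set A, IsIdealOf R I → I ≠ (R : Set A) → I ⊆ P) ∧
    ∀ u ∈ regularIn R, u ∉ P → ∃ w ∈ R, u * w = 1 ∧ w * u = 1 := by
  exact statement_5' R P hprime hRP hGoldie hinv
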